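/- (Chi-square tail bound.) Let Z_d be a random variable having the χ² distribution with d degrees of freedom. Then for all x > 0: P( Z_d − d ≥ x √(2d) ) ≤ exp( − x² / ( 2(1 + x √(2/d)) ) ). -/

import Mathlib

open MeasureTheory ProbabilityTheory Real ENNReal NNReal

private lemma pdf_mul (t y : ℝ) :
    gaussianPDFReal 0 1 y * Real.exp (t * y ^ 2)
      = (Real.sqrt (2 * π))⁻¹ * Real.exp (-(1/2 - t) * y ^ 2) := by
  simp only [gaussianPDFReal, NNReal.coe_one, mul_one, sub_zero]
  rw [mul_assoc, ← Real.exp_add]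
  congr 1
  ring

private lemma gauss_int (t : ℝ) (ht : t < 1/2) :
    Integrable (fun y : ℝ => Real.exp (t * y ^ 2)) (gaussianReal 0 1) ∧
    ∫ y, Real.exp (t * y ^ 2) ∂(gaussianReal 0 1) = (Real.sqrt (1 - 2 * t))⁻¹ := by
  have hb : (0:ℝ) < 1/2 - t := by linarith
  have hrw : gaussianReal 0 1
      = volume.withDensity fun y => (((gaussianPDFReal 0 1 y).toNNReal : ℝ≥0) : ℝ≥0∞) := by
    rw [gaussianReal_of_var_ne_zero _ one_ne_zero]; rfl
  have hpdfmeas : Measurable fun y : ℝ => (gaussianPDFReal 0 1 y).toNNReal :=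
    (measurable_gaussianPDFReal 0 1).real_toNNReal
  have hint : Integrable
      (fun y : ℝ => (Real.sqrt (2*π))⁻¹ * Real.exp (-(1/2 - t) * y ^ 2)) volume :=
    (integrable_exp_neg_mul_sq hb).const_mul _
  have hfun : (fun y : ℝ => ((gaussianPDFReal 0 1 y).toNNReal : ℝ≥0) • Real.exp (t * y ^ 2))
      = fun y : ℝ => (Real.sqrt (2*π))⁻¹ * Real.exp (-(1/2 - t) * y ^ 2) := by
    funext y
    rw [NNReal.smul_def, Real.coe_toNNReal _ (gaussianPDFReal_nonneg _ _ _), smul_eq_mul,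
      pdf_mul]
  constructor
  · rw [hrw, integrable_withDensity_iff_integrable_smul hpdfmeas]
    rw [show (fun y : ℝ => (gaussianPDFReal 0 1 y).toNNReal • Real.exp (t * y ^ 2)) = _ from hfun]
    exact hint
  · rw [hrw, integral_withDensity_eq_integral_smul hpdfmeas]
    rw [show (fun y : ℝ => (gaussianPDFReal 0 1 y).toNNReal • Real.exp (t * y ^ 2)) = _ from hfun]
    rw [MeasureTheory.integral_const_mul, integral_gaussian]
    rw [← Real.sqrt_inv, ← Real.sqrt_mul (by positivity)]
    rw [show ((2*π)⁻¹ * (π / (1/2 - t))) = (1 - 2*t)⁻¹ by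
      have h1 : (1:ℝ)/2 - t ≠ 0 := by linarith
      have h2 : (1:ℝ) - 2*t ≠ 0 := by linarith
      rw [eq_comm, inv_eq_iff_eq_inv]
      have hπ := Real.pi_ne_zero
      field_simp]
    rw [Real.sqrt_inv]

private lemma chernoff_calc (d : ℕ) (hd : 1 ≤ d) (s : ℝ) (hs : 0 < s) :
    Real.exp (-(s / (2 * ((d:ℝ) + s))) * ((d:ℝ) + s))
        * ((Real.sqrt (1 - 2 * (s / (2 * ((d:ℝ) + s)))))⁻¹) ^ d
      ≤ Real.exp (-(s ^ 2) / (4 * ((d:ℝ) + s))) := by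
  set D := (d:ℝ) with hDdef
  have hD : 1 ≤ D := by rw [hDdef]; exact_mod_cast hd
  have hDpos : (0:ℝ) < D := by linarith
  have hDs : (0:ℝ) < D + s := by linarith
  have h2t : 1 - 2 * (s / (2 * (D + s))) = D / (D + s) := by
    field_simp
    ring
  have hz : (0:ℝ) < (D + s)/D := by positivity
  have hz1 : 1 ≤ (D + s)/D := by rw [le_div_iff₀ hDpos]; linarith
  have hinv : (Real.sqrt (D/(D+s)))⁻¹ = Real.sqrt ((D+s)/D) := by
    rw [← Real.sqrt_inv, inv_div]
  have hsqrt_exp : Real.sqrt ((D+s)/D) = Real.exp (Real.log ((D+s)/D) / 2) := by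
    rw [← Real.log_sqrt hz.le, Real.exp_log (Real.sqrt_pos.mpr hz)]
  have hpow : (Real.sqrt ((D+s)/D)) ^ d = Real.exp (D * (Real.log ((D+s)/D) / 2)) := by
    rw [hsqrt_exp, ← Real.exp_nat_mul, ← hDdef]
  have hlog : Real.log ((D+s)/D) ≤ ((D+s)/D - D/(D+s))/2 := by
    have h0 : 0 ≤ Real.log ((D+s)/D) := Real.log_nonneg hz1
    calc Real.log ((D+s)/D) ≤ Real.sinh (Real.log ((D+s)/D)) := Real.self_le_sinh_iff.mpr h0
      _ = ((D+s)/D - ((D+s)/D)⁻¹)/2 := Real.sinh_log hz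
      _ = ((D+s)/D - D/(D+s))/2 := by rw [inv_div]
  rw [h2t, hinv, hpow, ← Real.exp_add]
  apply Real.exp_le_exp.mpr
  have hkey : -(s / (2*(D+s))) * (D+s) + D * ((((D+s)/D - D/(D+s)))/2 / 2)
      = -(s^2)/(4*(D+s)) := by
    field_simp
    ring
  nlinarith [mul_le_mul_of_nonneg_left hlog (by positivity : (0:ℝ) ≤ D), hkey]

theorem chi_square_tail_bound
    (d : ℕ) (hd : 1 ≤ d)
    (Ω : Type*) [MeasurableSpace Ω] (P : Measure Ω) [IsProbabilityMeasure P]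
    (g : Fin d → Ω → ℝ) (hmeas : ∀ i, Measurable (g i))
    (hindep : iIndepFun g P)
    (hlaw : ∀ i, P.map (g i) = gaussianReal 0 1)
    (x : ℝ) (hx : 0 < x) :
    P {ω | x * Real.sqrt (2 * d) ≤ (∑ i, (g i ω) ^ 2) - d}
      ≤ ENNReal.ofReal (Real.exp (-(x ^ 2) / (2 * (1 + x * Real.sqrt (2 / d))))) := by
  have hD : (1:ℝ) ≤ (d:ℝ) := by exact_mod_cast hd
  have hDpos : (0:ℝ) < d := by linarith
  set D := (d:ℝ) with hDdef
  set s : ℝ := x * Real.sqrt (2 * D) with hsdef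
  have hs : 0 < s := by
    apply mul_pos hx (Real.sqrt_pos.mpr (by linarith))
  have hDs : (0:ℝ) < D + s := by linarith
  set t : ℝ := s / (2 * (D + s)) with htdef
  have ht0 : 0 ≤ t := by positivity
  have htlt : t < 1/2 := by
    rw [htdef, div_lt_iff₀ (by positivity)]
    nlinarith
  -- the squared variables
  set X : Fin d → Ω → ℝ := fun i ω => g i ω ^ 2 with hXdef
  have hXmeas : ∀ i, Measurable (X i) := fun i => (hmeas i).pow_const 2
  have hindepX : iIndepFun X P := by
    have := hindep.comp (fun _ => fun y : ℝ => y ^ 2) (fun _ => measurable_id.pow_const 2)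
    exact this
  have hexpmeas : Measurable fun y : ℝ => Real.exp (t * y ^ 2) := by
    exact (measurable_id.pow_const 2 |>.const_mul t).exp
  have hint : ∀ i, Integrable (fun ω => Real.exp (t * X i ω)) P := by
    intro i
    have h := (gauss_int t htlt).1
    rw [← hlaw i] at h
    exact h.comp_aemeasurable (hmeas i).aemeasurable
  have hmgf : ∀ i, mgf (X i) P t = (Real.sqrt (1 - 2 * t))⁻¹ := by
    intro i
    have : mgf (X i) P t = ∫ y, Real.exp (t * y ^ 2) ∂(P.map (g i)) := by
      rw [integral_map (hmeas i).aemeasurable hexpmeas.aestronglyMeasurable]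
      rfl
    rw [this, hlaw i, (gauss_int t htlt).2]
  have hsum_int : Integrable (fun ω => Real.exp (t * (∑ i, X i) ω)) P :=
    hindepX.integrable_exp_mul_sum hXmeas (fun i _ => hint i)
  have hch := measure_ge_le_exp_mul_mgf (μ := P) (X := ∑ i, X i) (D + s) ht0 hsum_int
  have hmgfsum : mgf (∑ i, X i) P t = ((Real.sqrt (1 - 2 * t))⁻¹) ^ d := by
    rw [hindepX.mgf_sum hXmeas]
    simp [hmgf]
  rw [hmgfsum] at hch
  -- rewrite the event
  have hset : {ω | x * Real.sqrt (2 * (d:ℝ)) ≤ (∑ i, (g i ω) ^ 2) - d}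
      = {ω | D + s ≤ (∑ i, X i) ω} := by
    ext ω
    simp only [Set.mem_setOf_eq, Finset.sum_apply, hXdef, ← hsdef, ← hDdef]
    constructor <;> intro h <;> linarith
  -- exponent algebra
  have hsqD : Real.sqrt D * Real.sqrt D = D := Real.mul_self_sqrt hDpos.le
  have h2d : x * Real.sqrt (2 / D) = s / D := by
    rw [show (2:ℝ)/D = 2*D / D^2 by field_simp, Real.sqrt_div (by positivity),
      Real.sqrt_sq hDpos.le, hsdef]
    ring
  have hs2 : s ^ 2 = x ^ 2 * (2 * D) := by
    rw [hsdef, mul_pow, Real.sq_sqrt (by positivity)]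
  have hexp_eq : -(x ^ 2) / (2 * (1 + x * Real.sqrt (2 / D)))
      = -(s ^ 2) / (4 * (D + s)) := by
    rw [h2d, hs2]
    have h1 : 1 + s / D ≠ 0 := by positivity
    field_simp
    ring
  rw [hset, hexp_eq]
  have hbound := (hch.trans (chernoff_calc d hd s hs))
  calc P {ω | D + s ≤ (∑ i, X i) ω}
      = ENNReal.ofReal ((P {ω | D + s ≤ (∑ i, X i) ω}).toReal) :=
        (ENNReal.ofReal_toReal (measure_ne_top _ _)).symm
    _ ≤ ENNReal.ofReal (Real.exp (-(s ^ 2) / (4 * (D + s)))) :=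
        ENNReal.ofReal_le_ofReal hbound
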